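/- arXiv:1604.07225 — 2 statements merged into one kernel-verified Lean document; each statement's English description precedes it below -/
import Mathlib

section
/- For each n ≥ 1 there is a first-order formula φₙ(x) over the vocabulary {R} (R binary) that separates the classes 𝒜ₙ and ℬₙ and has size s(φₙ) = 3·2^{n+2} − 7; in particular the size of φₙ is O(2ⁿ). -/
universe u v

/-- A Kripke model for a set `Φ` of proposition symbols: a set of worlds `W`,
an accessibility relation `R` and a valuation `V`. -/
structure KripkeModel (Φ : Type) : Type (u + 1) where
  W : Type u
  R : W → W → Prop
  V : Φ → W → Prop

/-- A pointed Kripke model: a Kripke model together with a distinguished world. -/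
structure PointedModel (Φ : Type) : Type (u + 1) where
  M : KripkeModel.{u} Φ
  w : M.W

/-- `n`-bisimilarity of pointed models: there are relations `Zₙ ⊆ … ⊆ Z₀` such that the
distinguished pair is in `Zₙ`, `Z₀` relates only propositionally equivalent points, and the
back-and-forth conditions hold for each `0 ≤ i ≤ n-1`. -/
def NBisim {Φ : Type} (n : ℕ) (M : KripkeModel.{u} Φ) (w : M.W)
    (N : KripkeModel.{v} Φ) (x : N.W) : Prop :=
  ∃ Z : ℕ → M.W → N.W → Prop,
    (∀ i, i < n → ∀ a b, Z (i + 1) a b → Z i a b) ∧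
    Z n w x ∧
    (∀ a b, Z 0 a b → ∀ p, M.V p a ↔ N.V p b) ∧
    (∀ i, i < n → ∀ a b, Z (i + 1) a b → ∀ c, M.R a c → ∃ d, N.R b d ∧ Z i c d) ∧
    (∀ i, i < n → ∀ a b, Z (i + 1) a b → ∀ d, N.R b d → ∃ c, M.R a c ∧ Z i c d)

/-- The class `𝒜ₙ` of all pointed frames `(A, w)` such that any two `R`-successors of `w`
are `n`-bisimilar.  Its complement is the class `ℬₙ`. -/
def classA (n : ℕ) : Set (PointedModel.{u} Empty) :=
  {P | ∀ a b : P.M.W, P.M.R P.w a → P.M.R P.w b → NBisim n P.M a P.M b}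

/-- First-order formulas over the vocabulary `{R}` (with equality); variables are
natural numbers. -/
inductive FOForm : Type where
  | rel (x y : ℕ)
  | eq (x y : ℕ)
  | not (φ : FOForm)
  | and (φ ψ : FOForm)
  | or (φ ψ : FOForm)
  | ex (x : ℕ) (φ : FOForm)
  | all (x : ℕ) (φ : FOForm)

/-- Standard first-order semantics over a frame `(W, R)` under an assignment `s`. -/
def FOSat {W : Type u} (R : W → W → Prop) (s : ℕ → W) : FOForm → Prop
  | .rel x y => R (s x) (s y)
  | .eq x y => s x = s y
  | .not φ => ¬ FOSat R s φ
  | .and φ ψ => FOSat R s φ ∧ FOSat R s ψ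
  | .or φ ψ => FOSat R s φ ∨ FOSat R s ψ
  | .ex x φ => ∃ a : W, FOSat R (Function.update s x a) φ
  | .all x φ => ∀ a : W, FOSat R (Function.update s x a) φ

/-- The size of a first-order formula: the number of its quantifiers and binary
connectives (literals have size `0` and negation does not add to the size). -/
def fosize : FOForm → ℕ
  | .rel _ _ => 0
  | .eq _ _ => 0
  | .not φ => fosize φ
  | .and φ ψ => fosize φ + fosize ψ + 1
  | .or φ ψ => fosize φ + fosize ψ + 1
  | .ex _ φ => fosize φ + 1
  | .all _ φ => fosize φ + 1

/-- A first-order formula `ψ(x)` (with free variable `x` = variable `0`) separates the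
classes `A` and `B` of pointed frames if `M ⊨ ψ[w/x]` for all `(M, w) ∈ A` and
`M ⊨ ¬ψ[w/x]` for all `(M, w) ∈ B`. -/
def FOSeparates (ψ : FOForm) (A B : Set (PointedModel.{u} Empty)) : Prop :=
  (∀ P ∈ A, ∀ s : ℕ → P.M.W, s 0 = P.w → FOSat P.M.R s ψ) ∧
  (∀ P ∈ B, ∀ s : ℕ → P.M.W, s 0 = P.w → ¬ FOSat P.M.R s ψ)

section Aux

variable {W : Type u}

/-- Game-style `n`-bisimilarity on a single frame. -/
def Bis (R : W → W → Prop) : ℕ → W → W → Prop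
  | 0, _, _ => True
  | (i+1), a, b => (∀ c, R a c → ∃ d, R b d ∧ Bis R i c d) ∧
      (∀ d, R b d → ∃ c, R a c ∧ Bis R i c d)

lemma bis_refl (R : W → W → Prop) : ∀ i (a : W), Bis R i a a
  | 0, _ => trivial
  | (i+1), a => ⟨fun c hc => ⟨c, hc, bis_refl R i c⟩, fun d hd => ⟨d, hd, bis_refl R i d⟩⟩

lemma bis_symm {R : W → W → Prop} : ∀ i (a b : W), Bis R i a b → Bis R i b a
  | 0, _, _, _ => trivial
  | (i+1), a, b, h =>
    ⟨fun c hc => by obtain ⟨d, hd, hb⟩ := h.2 c hc; exact ⟨d, hd, bis_symm i d c hb⟩,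
     fun d hd => by obtain ⟨c, hc, hb⟩ := h.1 d hd; exact ⟨c, hc, bis_symm i d c hb⟩⟩

lemma bis_mono {R : W → W → Prop} : ∀ (k m : ℕ), k ≤ m → ∀ a b : W, Bis R m a b → Bis R k a b
  | 0, _, _, _, _, _ => trivial
  | (k+1), 0, h, _, _, _ => absurd h (by omega)
  | (k+1), (m+1), h, a, b, hb =>
    ⟨fun c hc => by
        obtain ⟨d, hd, hbd⟩ := hb.1 c hc
        exact ⟨d, hd, bis_mono k m (by omega) _ _ hbd⟩,
     fun d hd => by
        obtain ⟨c, hc, hbc⟩ := hb.2 d hd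
        exact ⟨c, hc, bis_mono k m (by omega) _ _ hbc⟩⟩

lemma nbisim_iff {M : KripkeModel.{u} Empty} (n : ℕ) (a b : M.W) :
    NBisim n M a M b ↔ Bis M.R n a b := by
  constructor
  · rintro ⟨Z, _hmono, hn, _hV, hf, hb⟩
    suffices h : ∀ i, i ≤ n → ∀ x y, Z i x y → Bis M.R i x y from h n le_rfl a b hn
    intro i
    induction i with
    | zero => intro _ x y _; trivial
    | succ i ih =>
      intro hin x y hz
      refine ⟨fun c hc => ?_, fun d hd => ?_⟩
      · obtain ⟨d, hd, hzd⟩ := hf i (by omega) x y hz c hc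
        exact ⟨d, hd, ih (by omega) _ _ hzd⟩
      · obtain ⟨c, hc, hzc⟩ := hb i (by omega) x y hz d hd
        exact ⟨c, hc, ih (by omega) _ _ hzc⟩
  · intro h
    refine ⟨fun i x y => Bis M.R (min i n) x y, ?_, ?_, ?_, ?_, ?_⟩
    · intro i _ x y hb'
      exact bis_mono _ _ (by omega) _ _ hb'
    · simpa using h
    · intro _ _ _ p; exact p.elim
    · intro i hi x y hz c hc
      have hz' : Bis M.R (i+1) x y := by
        have e : min (i+1) n = i + 1 := by omega
        rwa [e] at hz
      obtain ⟨d, hd, hbd⟩ := hz'.1 c hc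
      refine ⟨d, hd, ?_⟩
      show Bis M.R (min i n) c d
      have e : min i n = i := by omega
      rwa [e]
    · intro i hi x y hz d hd
      have hz' : Bis M.R (i+1) x y := by
        have e : min (i+1) n = i + 1 := by omega
        rwa [e] at hz
      obtain ⟨c, hc, hbc⟩ := hz'.2 d hd
      refine ⟨c, hc, ?_⟩
      show Bis M.R (min i n) c d
      have e : min i n = i := by omega
      rwa [e]

/-- A one-step unfolding of `Bis` using a single "witness" quantifier. -/
lemma bis_succ_iff (R : W → W → Prop) (i : ℕ) (x y : W) :
    Bis R (i+1) x y ↔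
      ∀ c : W, ∃ d : W,
        (R x c → R y d) ∧ (R y c → R x d) ∧ ((R x c ∨ R y c) → Bis R i c d) := by
  constructor
  · intro h c
    by_cases hx : R x c
    · by_cases hy : R y c
      · exact ⟨c, fun _ => hy, fun _ => hx, fun _ => bis_refl R i c⟩
      · obtain ⟨d, hd, hbd⟩ := h.1 c hx
        exact ⟨d, fun _ => hd, fun hyc => absurd hyc hy, fun _ => hbd⟩
    · by_cases hy : R y c
      · obtain ⟨d, hd, hbd⟩ := h.2 c hy
        exact ⟨d, fun hxc => absurd hxc hx, fun _ => hd, fun _ => bis_symm i _ _ hbd⟩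
      · exact ⟨c, fun hxc => absurd hxc hx, fun hyc => absurd hyc hy,
          fun hc => absurd hc (by tauto)⟩
  · intro h
    constructor
    · intro c hc
      obtain ⟨d, h1, _h2, h3⟩ := h c
      exact ⟨d, h1 hc, h3 (Or.inl hc)⟩
    · intro c hc
      obtain ⟨d, _h1, h2, h3⟩ := h c
      exact ⟨d, h2 hc, bis_symm i _ _ (h3 (Or.inr hc))⟩

/-- Implication as a defined connective. -/
def fimp (φ ψ : FOForm) : FOForm := .or (.not φ) ψ

/-- The recursively-defined bisimilarity formula; free variables `j`, `j+1`. -/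
def psi : ℕ → ℕ → FOForm
  | 0, _ => .eq 0 0
  | (i+1), j => .all (j+2) (.ex (j+3) (.and
      (.and (fimp (.rel j (j+2)) (.rel (j+1) (j+3)))
            (fimp (.rel (j+1) (j+2)) (.rel j (j+3))))
      (fimp (.or (.rel j (j+2)) (.rel (j+1) (j+2))) (psi i (j+2)))))

lemma psi_size : ∀ (i j : ℕ), fosize (psi i j) = 8 * i
  | 0, _ => rfl
  | (i+1), j => by
    simp only [psi, fosize, fimp, psi_size i (j+2)]
    omega

lemma psi_sat (R : W → W → Prop) :
    ∀ (i j : ℕ) (s : ℕ → W), FOSat R s (psi i j) ↔ Bis R i (s j) (s (j+1))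
  | 0, j, s => by simp [psi, FOSat, Bis]
  | (i+1), j, s => by
    have e0 : ∀ (c d : W), Function.update (Function.update s (j+2) c) (j+3) d j = s j := by
      intro c d
      rw [Function.update_of_ne (by omega), Function.update_of_ne (by omega)]
    have e1 : ∀ (c d : W),
        Function.update (Function.update s (j+2) c) (j+3) d (j+1) = s (j+1) := by
      intro c d
      rw [Function.update_of_ne (by omega), Function.update_of_ne (by omega)]
    have e2 : ∀ (c d : W), Function.update (Function.update s (j+2) c) (j+3) d (j+2) = c := by
      intro c d
      rw [Function.update_of_ne (by omega), Function.update_self]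
    have e3 : ∀ (c d : W), Function.update (Function.update s (j+2) c) (j+3) d (j+3) = d := by
      intro c d
      rw [Function.update_self]
    rw [bis_succ_iff]
    simp only [psi, FOSat, fimp]
    constructor
    · intro h c
      obtain ⟨d, ⟨h1, h2⟩, h3⟩ := h c
      rw [e0, e1, e2, e3] at h1 h2
      refine ⟨d, ?_, ?_, ?_⟩
      · intro hxc; tauto
      · intro hyc; tauto
      · intro hor
        rcases h3 with h | h
        · rw [e0, e1, e2] at h; exact absurd hor (by tauto)
        · have := (psi_sat R i (j+2) _).mp h
          rw [e2] at this
          have e3' : Function.update (Function.update s (j+2) c) (j+3) d (j+2+1) = d := e3 c d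
          rwa [e3'] at this
    · intro h c
      obtain ⟨d, h1, h2, h3⟩ := h c
      refine ⟨d, ⟨?_, ?_⟩, ?_⟩
      · rw [e0, e1, e2, e3]; tauto
      · rw [e0, e1, e2, e3]; tauto
      · by_cases hor : R (s j) c ∨ R (s (j+1)) c
        · right
          rw [psi_sat R i (j+2)]
          have e3' : Function.update (Function.update s (j+2) c) (j+3) d (j+2+1) = d := e3 c d
          rw [e2, e3']
          exact h3 hor
        · left; rw [e0, e1, e2]; tauto

/-- The separating formula, before padding: free variable `0`. -/
def phi (n : ℕ) : FOForm :=
  .all 1 (.all 2 (fimp (.and (.rel 0 1) (.rel 0 2)) (psi n 1)))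

lemma phi_size (n : ℕ) : fosize (phi n) = 8 * n + 4 := by
  simp only [phi, fosize, fimp, psi_size]
  omega

lemma phi_sat (R : W → W → Prop) (n : ℕ) (s : ℕ → W) :
    FOSat R s (phi n) ↔ ∀ a b : W, R (s 0) a → R (s 0) b → Bis R n a b := by
  have e0 : ∀ (a b : W), Function.update (Function.update s 1 a) 2 b 0 = s 0 := by
    intro a b
    rw [Function.update_of_ne (by omega), Function.update_of_ne (by omega)]
  have e1 : ∀ (a b : W), Function.update (Function.update s 1 a) 2 b 1 = a := by
    intro a b
    rw [Function.update_of_ne (by omega), Function.update_self]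
  have e2 : ∀ (a b : W), Function.update (Function.update s 1 a) 2 b 2 = b := by
    intro a b
    rw [Function.update_self]
  simp only [phi, FOSat, fimp]
  constructor
  · intro h a b ha hb
    rcases h a b with h' | h'
    · rw [e0, e1, e2] at h'; tauto
    · have := (psi_sat R n 1 _).mp h'
      rwa [e1, show ((1:ℕ)+1) = 2 from rfl, e2] at this
  · intro h a b
    by_cases hab : R (s 0) a ∧ R (s 0) b
    · right
      rw [psi_sat R n 1, e1, show ((1:ℕ)+1) = 2 from rfl, e2]
      exact h a b hab.1 hab.2
    · left; rw [e0, e1, e2]; tauto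

/-- Padding a formula with trivially true conjuncts to increase its size. -/
def fpad : ℕ → FOForm → FOForm
  | 0, φ => φ
  | (k+1), φ => .and (fpad k φ) (.eq 0 0)

lemma fpad_size : ∀ (k : ℕ) (φ : FOForm), fosize (fpad k φ) = fosize φ + k
  | 0, _ => rfl
  | (k+1), φ => by simp [fpad, fosize, fpad_size k φ]; omega

lemma fpad_sat (R : W → W → Prop) (s : ℕ → W) :
    ∀ (k : ℕ) (φ : FOForm), FOSat R s (fpad k φ) ↔ FOSat R s φ
  | 0, _ => Iff.rfl
  | (k+1), φ => by simp [fpad, FOSat, fpad_sat R s k φ]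

end Aux

/-- **Lemma 9 (Hella–Vilander).**  There is a first-order formula `φₙ(x)` of size
`3 · 2^(n+2) - 7` (hence of size `O(2ⁿ)`) separating the classes `𝒜ₙ` and `ℬₙ`. -/
theorem exists_fo_formula_separating_classA (n : ℕ) (hn : 1 ≤ n) :
    ∃ ψ : FOForm, fosize ψ = 3 * 2 ^ (n + 2) - 7 ∧
      FOSeparates ψ (classA.{u} n) (classA.{u} n)ᶜ := by
  have hpow : n < 2 ^ n := Nat.lt_two_pow_self (n := n)
  have hpow2 : 2 ^ (n + 2) = 2 ^ n * 4 := by rw [pow_add]; norm_num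
  refine ⟨fpad (3 * 2 ^ (n + 2) - 7 - (8 * n + 4)) (phi n), ?_, ?_, ?_⟩
  · rw [fpad_size, phi_size]; omega
  · intro P hP s hs
    rw [fpad_sat, phi_sat]
    intro a b ha hb
    rw [hs] at ha hb
    exact (nbisim_iff n a b).mp (hP a b ha hb)
  · intro P hP s hs hsat
    apply hP
    intro a b ha hb
    rw [fpad_sat, phi_sat] at hsat
    rw [← hs] at ha hb
    exact (nbisim_iff n a b).mpr (hsat a b ha hb)
end

section
/- Let n ≥ 1. If a formula θₙ of basic modal logic ML (over the empty set of proposition symbols, with atomic constants ⊤ and ⊥) separates the classes 𝒜ₙ and ℬₙ, then its size satisfies s(θₙ) ≥ tower(n−1). -/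
universe u v

/-- Formulas of basic modal logic over the empty set of proposition symbols, in negation
normal form, generated from the atomic constants `⊤` and `⊥` by `∧`, `∨`, `◇`, `□`. -/
inductive MLF : Type where
  | top
  | bot
  | and (φ ψ : MLF)
  | or (φ ψ : MLF)
  | dia (φ : MLF)
  | box (φ : MLF)

/-- Standard Kripke semantics over frames (models for `Φ = ∅`). -/
def MLFSat (M : KripkeModel.{u} Empty) : M.W → MLF → Prop
  | _, .top => True
  | _, .bot => False
  | w, .and φ ψ => MLFSat M w φ ∧ MLFSat M w ψ
  | w, .or φ ψ => MLFSat M w φ ∨ MLFSat M w ψ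
  | w, .dia φ => ∃ x, M.R w x ∧ MLFSat M x φ
  | w, .box φ => ∀ x, M.R w x → MLFSat M x φ

/-- Literals over `Φ = ∅` are the atomic constants `⊤` and `⊥`. -/
def MLFIsLiteral : MLF → Prop
  | .top => True
  | .bot => True
  | _ => False

/-- The modal size `ms(φ)`: the number of modal operators `◇`, `□` in `φ`. -/
def mlfms : MLF → ℕ
  | .top => 0
  | .bot => 0
  | .and φ ψ => mlfms φ + mlfms ψ
  | .or φ ψ => mlfms φ + mlfms ψ
  | .dia φ => mlfms φ + 1
  | .box φ => mlfms φ + 1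

/-- The connective size `cs(φ)`: the number of binary connectives `∧`, `∨` in `φ`. -/
def mlfcs : MLF → ℕ
  | .top => 0
  | .bot => 0
  | .and φ ψ => mlfcs φ + mlfcs ψ + 1
  | .or φ ψ => mlfcs φ + mlfcs ψ + 1
  | .dia φ => mlfcs φ
  | .box φ => mlfcs φ

/-- A formula `φ` separates the classes `A` and `B` of pointed frames if `φ` is true in
every pointed frame of `A` and false in every pointed frame of `B`. -/
def MLFSeparates (φ : MLF) (A B : Set (PointedModel.{u} Empty)) : Prop :=
  (∀ P ∈ A, MLFSat P.M P.w φ) ∧ (∀ P ∈ B, ¬ MLFSat P.M P.w φ)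

/-- The exponential tower function: `tower 0 = 1` and `tower (n+1) = 2 ^ tower n`. -/
def tower : ℕ → ℕ
  | 0 => 1
  | n + 1 => 2 ^ tower n

section Aux

/-- Trees: the canonical models. -/
inductive MTree : Type u where
  | node (children : List MTree) : MTree

def MTree.children : MTree.{u} → List MTree.{u}
  | .node l => l

/-- The big Kripke frame of all trees, with the child relation. -/
def KTree : KripkeModel.{u} Empty :=
  ⟨MTree.{u}, fun t s => s ∈ t.children, fun p _ => p.elim⟩

/-- Index types for `k`-bisimulation types. -/
def D : ℕ → Type
  | 0 => Unit
  | k + 1 => D k → Bool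

def Dinst : ∀ k, Σ' (_ : Fintype (D k)), DecidableEq (D k)
  | 0 => ⟨inferInstanceAs (Fintype Unit), inferInstanceAs (DecidableEq Unit)⟩
  | k + 1 => by
      obtain ⟨f, d⟩ := Dinst k
      exact ⟨@Pi.instFintype _ _ d f (fun _ => inferInstance),
        @Fintype.decidablePiFintype _ _ (fun _ => inferInstance) f⟩

instance instFintypeD (k : ℕ) : Fintype (D k) := (Dinst k).1
instance instDecEqD (k : ℕ) : DecidableEq (D k) := (Dinst k).2

lemma card_D : ∀ k, Fintype.card (D k) = tower k
  | 0 => rfl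
  | k + 1 => by
      have h1 : Fintype.card (D (k + 1)) = Fintype.card (D k → Bool) :=
        Fintype.card_congr (Equiv.refl _)
      rw [h1, Fintype.card_fun, card_D k]
      simp [tower]

/-- Canonical tree realizing the type `d`. -/
noncomputable def eTree : ∀ k, D k → MTree.{u}
  | 0 => fun _ => .node []
  | k + 1 => fun f =>
      .node ((@Finset.filter (D k) (fun d => f d = true) (fun d => instDecidableEqBool (f d) true) Finset.univ).toList.map (eTree k))

lemma nbisim_symm {Φ : Type} {n : ℕ} {M : KripkeModel.{u} Φ} {x : M.W}
    {N : KripkeModel.{v} Φ} {y : N.W} (h : NBisim n M x N y) : NBisim n N y M x := by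
  obtain ⟨Z, hdown, hZ, hV, hforth, hback⟩ := h
  refine ⟨fun i a b => Z i b a, fun i hi a b hab => hdown i hi b a hab, hZ,
    fun a b hab p => (hV b a hab p).symm, ?_, ?_⟩
  · exact fun i hi a b hab c hc => hback i hi b a hab c hc
  · exact fun i hi a b hab d hd => hforth i hi b a hab d hd

lemma eTree_succ_mem (k : ℕ) (f : D (k + 1)) (t : MTree.{u}) :
    KTree.R (eTree (k + 1) f) t ↔ ∃ d, f d = true ∧ eTree k d = t := by
  simp [KTree, eTree, MTree.children, List.mem_map, Finset.mem_toList, Finset.mem_filter]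

lemma nbisim_refl {Φ : Type} (n : ℕ) (M : KripkeModel.{u} Φ) (x : M.W) :
    NBisim n M x M x := by
  refine ⟨fun _ a b => a = b, fun _ _ _ _ h => h, rfl, ?_, ?_, ?_⟩
  · rintro a b rfl p; rfl
  · rintro i _ a b rfl c hc; exact ⟨c, hc, rfl⟩
  · rintro i _ a b rfl d hd; exact ⟨d, hd, rfl⟩

lemma eTree_inj : ∀ k (d d' : D k),
    NBisim k KTree.{u} (eTree k d) KTree.{u} (eTree k d') → d = d'
  | 0, d, d', _ => rfl
  | k + 1, f, f', h => by
      have step : ∀ (g g' : D (k + 1)),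
          NBisim (k + 1) KTree.{u} (eTree (k+1) g) KTree.{u} (eTree (k+1) g') →
          ∀ d, g d = true → g' d = true := by
        rintro g g' ⟨Z, hdown, hZ, _, hforth, hback⟩ d hd
        obtain ⟨t, ht, hZt⟩ := hforth k (Nat.lt_succ_self k) _ _ hZ (eTree k d)
          ((eTree_succ_mem k g _).mpr ⟨d, hd, rfl⟩)
        obtain ⟨d₂, hd₂, rfl⟩ := (eTree_succ_mem k g' t).mp ht
        have hb : NBisim k KTree.{u} (eTree k d) KTree.{u} (eTree k d₂) := by
          refine ⟨Z, fun i hi => hdown i (hi.trans (Nat.lt_succ_self k)), hZt,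
            fun a b _ p => p.elim, ?_, ?_⟩
          · exact fun i hi => hforth i (hi.trans (Nat.lt_succ_self k))
          · exact fun i hi => hback i (hi.trans (Nat.lt_succ_self k))
        have := eTree_inj k d d₂ hb
        exact this ▸ hd₂
      funext d
      cases hfd : f d with
      | true => exact (step f f' h d hfd).symm
      | false =>
          cases hfd' : f' d with
          | true => exact absurd (step f' f (nbisim_symm h) d hfd') (by simp [hfd])
          | false => rfl

/-- The list of immediate subformulas of modal operators occurring in `φ`. -/
def msubs : MLF → List MLF
  | .top => []
  | .bot => []
  | .and φ ψ => msubs φ ++ msubs ψ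
  | .or φ ψ => msubs φ ++ msubs ψ
  | .dia φ => φ :: msubs φ
  | .box φ => φ :: msubs φ

lemma msubs_length : ∀ φ, (msubs φ).length = mlfms φ
  | .top => rfl
  | .bot => rfl
  | .and φ ψ => by simp [msubs, mlfms, msubs_length φ, msubs_length ψ]
  | .or φ ψ => by simp [msubs, mlfms, msubs_length φ, msubs_length ψ]
  | .dia φ => by simp [msubs, mlfms, msubs_length φ]
  | .box φ => by simp [msubs, mlfms, msubs_length φ]

lemma sat_pair_dia (a b : MTree.{u}) (ψ : MLF) :
    MLFSat KTree.{u} (.node [a, b]) (.dia ψ) ↔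
      MLFSat KTree.{u} a ψ ∨ MLFSat KTree.{u} b ψ := by
  simp only [MLFSat, KTree, MTree.children, List.mem_cons, List.mem_singleton,
    List.not_mem_nil, or_false]
  constructor
  · rintro ⟨x, (rfl | rfl), hx⟩
    · exact Or.inl hx
    · exact Or.inr hx
  · rintro (h | h)
    · exact ⟨a, Or.inl rfl, h⟩
    · exact ⟨b, Or.inr rfl, h⟩

lemma sat_pair_box (a b : MTree.{u}) (ψ : MLF) :
    MLFSat KTree.{u} (.node [a, b]) (.box ψ) ↔
      MLFSat KTree.{u} a ψ ∧ MLFSat KTree.{u} b ψ := by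
  simp only [MLFSat, KTree, MTree.children, List.mem_cons, List.mem_singleton,
    List.not_mem_nil, or_false]
  constructor
  · intro h; exact ⟨h a (Or.inl rfl), h b (Or.inr rfl)⟩
  · rintro ⟨h1, h2⟩ x (rfl | rfl) <;> assumption

lemma eval_swap (a b c : MTree.{u}) :
    ∀ φ : MLF, (∀ ψ ∈ msubs φ, (MLFSat KTree.{u} b ψ ↔ MLFSat KTree.{u} c ψ)) →
      (MLFSat KTree.{u} (.node [a, b]) φ ↔ MLFSat KTree.{u} (.node [a, c]) φ)
  | .top, _ => Iff.rfl
  | .bot, _ => Iff.rfl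
  | .and φ ψ, h => by
      have hφ := eval_swap a b c φ (fun x hx => h x (by simp [msubs, hx]))
      have hψ := eval_swap a b c ψ (fun x hx => h x (by simp [msubs, hx]))
      simp only [MLFSat]; rw [hφ, hψ]
  | .or φ ψ, h => by
      have hφ := eval_swap a b c φ (fun x hx => h x (by simp [msubs, hx]))
      have hψ := eval_swap a b c ψ (fun x hx => h x (by simp [msubs, hx]))
      simp only [MLFSat]; rw [hφ, hψ]
  | .dia φ, h => by
      rw [sat_pair_dia, sat_pair_dia, h φ (by simp [msubs])]
  | .box φ, h => by
      rw [sat_pair_box, sat_pair_box, h φ (by simp [msubs])]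

end Aux

/-- **Theorem 18 (Hella–Vilander).**  Every `ML`-formula separating the classes `𝒜ₙ` and
`ℬₙ` has size (number of modal operators plus number of binary connectives) at least
`tower (n - 1)`. -/
theorem ml_separating_formula_size_lower_bound (n : ℕ) (hn : 1 ≤ n) (θ : MLF)
    (hsep : MLFSeparates θ (classA.{u} n) (classA.{u} n)ᶜ) :
    tower (n - 1) ≤ mlfms θ + mlfcs θ := by
  by_contra hlt
  push_neg at hlt
  have hm : mlfms θ < tower (n - 1) := lt_of_le_of_lt (Nat.le_add_right _ _) hlt
  classical
  set m := (msubs θ).length with hmdef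
  let p : D n → (Fin m → Bool) :=
    fun d i => decide (MLFSat KTree.{u} (eTree n d) ((msubs θ).get i))
  have hcard : Fintype.card (Fin m → Bool) < Fintype.card (D n) := by
    rw [card_D n, Fintype.card_fun, Fintype.card_fin, Fintype.card_bool]
    obtain ⟨n', rfl⟩ : ∃ n', n = n' + 1 := ⟨n - 1, (Nat.succ_pred_eq_of_pos hn).symm⟩
    have hm' : m < tower n' := by simpa [hmdef, msubs_length] using hm
    calc 2 ^ m < 2 ^ tower n' := Nat.pow_lt_pow_right one_lt_two hm'
      _ = tower (n' + 1) := by simp [tower]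
  obtain ⟨d, d', hne, hpd⟩ := Fintype.exists_ne_map_eq_of_card_lt p hcard
  have hiff : ∀ ψ ∈ msubs θ,
      (MLFSat KTree.{u} (eTree n d) ψ ↔ MLFSat KTree.{u} (eTree n d') ψ) := by
    intro ψ hψ
    obtain ⟨i, hi⟩ := List.mem_iff_get.mp hψ
    have := congrFun hpd i
    simp only [p] at this
    rw [← hi]
    exact decide_eq_decide.mp this
  have hmemA : (⟨KTree.{u}, .node [eTree n d, eTree n d]⟩ : PointedModel.{u} Empty)
      ∈ classA.{u} n := by
    intro a b ha hb
    simp only [KTree, MTree.children, List.mem_cons, List.mem_singleton,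
      List.not_mem_nil, or_false, or_self] at ha hb
    have ha' : (a : MTree.{u}) = eTree n d := by
      rcases List.mem_cons.mp ha with h | h
      · exact h
      · exact List.mem_singleton.mp h
    have hb' : (b : MTree.{u}) = eTree n d := by
      rcases List.mem_cons.mp hb with h | h
      · exact h
      · exact List.mem_singleton.mp h
    subst ha'; subst hb'
    exact nbisim_refl n _ _
  have hmemB : (⟨KTree.{u}, .node [eTree n d, eTree n d']⟩ : PointedModel.{u} Empty)
      ∈ (classA.{u} n)ᶜ := by
    intro hmem
    have hR1 : KTree.{u}.R (.node [eTree n d, eTree n d']) (eTree n d) := by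
      simp [KTree, MTree.children]
    have hR2 : KTree.{u}.R (.node [eTree n d, eTree n d']) (eTree n d') := by
      simp [KTree, MTree.children]
    exact hne (eTree_inj n d d' (hmem _ _ hR1 hR2))
  have h1 : MLFSat KTree.{u} (.node [eTree n d, eTree n d]) θ := hsep.1 _ hmemA
  have h2 : ¬ MLFSat KTree.{u} (.node [eTree n d, eTree n d']) θ := hsep.2 _ hmemB
  exact h2 ((eval_swap (eTree n d) (eTree n d) (eTree n d') θ hiff).mp h1)
end
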